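/- arXiv:2511.12672 — 4 statements merged into one kernel-verified Lean document; each statement's English description precedes it below -/
import Mathlib

section
/- Let X and Y be real Banach spaces. Assume: (i) there is a continuous linear map P : X → X with P∘P = P and ‖P‖ ≤ 1 and a surjective linear isometry from Y onto the range of P, and there is a continuous linear map R : Y → Y with R∘R = R and ‖R‖ ≤ 1 and a surjective linear isometry from X onto the range of R; (ii) there is a surjective linear isometry from X onto X × X and a surjective linear isometry from Y onto Y × Y, where products carry the max norm. Then there exists a continuous linear equivalence T : X ≃ Y with ‖T‖·‖T⁻¹‖ ≤ (3 + √2)². -/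
lemma aux_decomp {U V : Type*} [NormedAddCommGroup U] [NormedSpace ℝ U]
    [NormedAddCommGroup V] [NormedSpace ℝ V]
    (P : U →L[ℝ] U) (hPidem : ∀ x, P (P x) = P x) (hPnorm : ‖P‖ ≤ 1)
    (e : V ≃ₗᵢ[ℝ] LinearMap.range (P : U →ₗ[ℝ] U))
    (sq : V ≃ₗᵢ[ℝ] V × V) :
    ∃ Ψ : U ≃L[ℝ] V × U,
      (∀ x, ‖(Ψ x).1‖ ≤ (8/3) * ‖P x‖ ∧ ‖(Ψ x).2‖ ≤ (55/18) * ‖x‖ + (73/18) * ‖P x‖) ∧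
      (∀ q : V × U, ‖Ψ.symm q‖ ≤ max ((3/8) * ‖q.1‖) ‖q.2‖ + (36/55) * ‖q.2‖) := by
  classical
  set S := LinearMap.range (P : U →ₗ[ℝ] U) with hS
  have hmem : ∀ x, P x ∈ S := fun x => LinearMap.mem_range_self _ x
  have hfix : ∀ u : S, P (u : U) = (u : U) := by
    rintro ⟨_, z, rfl⟩
    simpa using hPidem z
  let Pr : U →L[ℝ] S := P.codRestrict S hmem
  let eV : S →L[ℝ] V := (e.symm.toContinuousLinearEquiv : S ≃L[ℝ] V)
  let eS : V →L[ℝ] S := (e.toContinuousLinearEquiv : V ≃L[ℝ] S)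
  let sqF : V →L[ℝ] V × V := (sq.toContinuousLinearEquiv : V ≃L[ℝ] V × V)
  let sqB : V × V →L[ℝ] V := (sq.symm.toContinuousLinearEquiv : (V × V) ≃L[ℝ] V)
  let incl : S →L[ℝ] U := S.subtypeL
  let k : U →L[ℝ] U := ContinuousLinearMap.id ℝ U - P
  let b : U →L[ℝ] V × V := sqF.comp (eV.comp Pr)
  let f : U →L[ℝ] V × U :=
    ((8/3 : ℝ) • (ContinuousLinearMap.fst ℝ V V).comp b).prod
      ((incl.comp (eS.comp ((ContinuousLinearMap.snd ℝ V V).comp b))) + (55/18 : ℝ) • k)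
  let g : V × U →L[ℝ] U :=
    (incl.comp (eS.comp (sqB.comp
      (((3/8 : ℝ) • ContinuousLinearMap.fst ℝ V U).prod
        (eV.comp (Pr.comp (ContinuousLinearMap.snd ℝ V U)))))))
    + (18/55 : ℝ) • (k.comp (ContinuousLinearMap.snd ℝ V U))
  have hf : ∀ x : U, f x = ((8/3 : ℝ) • (sq (e.symm (Pr x))).1,
      (↑(e ((sq (e.symm (Pr x))).2)) : U) + (55/18 : ℝ) • (x - P x)) := fun x => rfl
  have hg : ∀ q : V × U, g q =
      (↑(e (sq.symm ((3/8 : ℝ) • q.1, e.symm (Pr q.2)))) : U)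
        + (18/55 : ℝ) • (q.2 - P q.2) := by
    intro q
    simp [g, k, incl, eS, eV, sqB, Pr]
  have hPle : ∀ x : U, ‖P x‖ ≤ ‖x‖ := fun x =>
    (P.le_opNorm x).trans (by nlinarith [norm_nonneg x])
  have h₁ : Function.LeftInverse g f := by
    intro x
    rw [hf, hg]
    set w := sq (e.symm (Pr x)) with hw
    have hPx' : P ((↑(e w.2) : U) + (55/18 : ℝ) • (x - P x)) = ↑(e w.2) := by
      rw [map_add, map_smul, map_sub, hPidem, sub_self, smul_zero, add_zero, hfix]
    have hPr' : Pr ((↑(e w.2) : U) + (55/18 : ℝ) • (x - P x)) = e w.2 :=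
      Subtype.ext hPx'
    have h38 : (3/8 : ℝ) • ((8/3 : ℝ) • w.1) = w.1 := by
      rw [smul_smul]; norm_num
    simp only [hPr', h38, LinearIsometryEquiv.symm_apply_apply, Prod.mk.eta]
    rw [show sq.symm w = e.symm (Pr x) from by rw [hw, LinearIsometryEquiv.symm_apply_apply],
      LinearIsometryEquiv.apply_symm_apply]
    have hcoe : (↑(Pr x) : U) = P x := rfl
    rw [hcoe]
    have hsub : ((↑(e w.2) : U) + (55/18 : ℝ) • (x - P x)) - P ((↑(e w.2) : U)
        + (55/18 : ℝ) • (x - P x)) = (55/18 : ℝ) • (x - P x) := by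
      rw [hPx', add_sub_cancel_left]
    rw [hsub, smul_smul]
    norm_num
  have h₂ : Function.RightInverse g f := by
    intro q
    rw [hg, hf]
    set z := sq.symm ((3/8 : ℝ) • q.1, e.symm (Pr q.2)) with hz
    have hPw : P ((↑(e z) : U) + (18/55 : ℝ) • (q.2 - P q.2)) = ↑(e z) := by
      rw [map_add, map_smul, map_sub, hPidem, sub_self, smul_zero, add_zero, hfix]
    have hPrw : Pr ((↑(e z) : U) + (18/55 : ℝ) • (q.2 - P q.2)) = e z :=
      Subtype.ext hPw
    have hsub : ((↑(e z) : U) + (18/55 : ℝ) • (q.2 - P q.2)) - P ((↑(e z) : U)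
        + (18/55 : ℝ) • (q.2 - P q.2)) = (18/55 : ℝ) • (q.2 - P q.2) := by
      rw [hPw, add_sub_cancel_left]
    rw [hPrw, hsub, LinearIsometryEquiv.symm_apply_apply, hz,
      LinearIsometryEquiv.apply_symm_apply]
    refine Prod.ext ?_ ?_
    · show (8/3 : ℝ) • ((3/8 : ℝ) • q.1) = q.1
      rw [smul_smul]; norm_num
    · show (↑(e (e.symm (Pr q.2))) : U) + (55/18 : ℝ) • ((18/55 : ℝ) • (q.2 - P q.2)) = q.2
      rw [LinearIsometryEquiv.apply_symm_apply, smul_smul]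
      have hcoe : (↑(Pr q.2) : U) = P q.2 := rfl
      rw [hcoe]
      norm_num
  refine ⟨ContinuousLinearEquiv.equivOfInverse f g h₁ h₂, ?_, ?_⟩
  · intro x
    rw [ContinuousLinearEquiv.equivOfInverse_apply, hf]
    set w := sq (e.symm (Pr x)) with hw
    have hnw : ‖w‖ = ‖P x‖ := by
      rw [hw, sq.norm_map, e.symm.norm_map]
      rfl
    constructor
    · have h1 : ‖(8/3 : ℝ) • w.1‖ = (8/3) * ‖w.1‖ := by
        rw [norm_smul, Real.norm_eq_abs]; norm_num
      have h2 : ‖w.1‖ ≤ ‖w‖ := norm_fst_le w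
      simp only []
      rw [h1]
      nlinarith [hnw]
    · have h2 : ‖w.2‖ ≤ ‖w‖ := norm_snd_le w
      have hc : ‖(↑(e w.2) : U)‖ = ‖w.2‖ := by rw [← e.norm_map w.2]; rfl
      calc ‖(↑(e w.2) : U) + (55/18 : ℝ) • (x - P x)‖
          ≤ ‖(↑(e w.2) : U)‖ + ‖(55/18 : ℝ) • (x - P x)‖ := norm_add_le _ _
        _ ≤ ‖P x‖ + (55/18) * (‖x‖ + ‖P x‖) := by
            rw [hc, norm_smul, Real.norm_eq_abs,
              show |(55/18 : ℝ)| = 55/18 from by norm_num]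
            have := norm_sub_le x (P x)
            have h3 : ‖w.2‖ ≤ ‖P x‖ := h2.trans_eq hnw
            nlinarith
        _ ≤ (55/18) * ‖x‖ + (73/18) * ‖P x‖ := by ring_nf; linarith
  · intro q
    have hsymm : (ContinuousLinearEquiv.equivOfInverse f g h₁ h₂).symm q = g q := rfl
    rw [hsymm, hg]
    set z := sq.symm ((3/8 : ℝ) • q.1, e.symm (Pr q.2)) with hz
    have hnz : ‖z‖ = max ((3/8) * ‖q.1‖) ‖P q.2‖ := by
      rw [hz, sq.symm.norm_map, Prod.norm_def]
      congr 1
      · rw [norm_smul, Real.norm_eq_abs]; norm_num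
      · rw [e.symm.norm_map]; rfl
    have hc : ‖(↑(e z) : U)‖ = ‖z‖ := by rw [← e.norm_map z]; rfl
    calc ‖(↑(e z) : U) + (18/55 : ℝ) • (q.2 - P q.2)‖
        ≤ ‖(↑(e z) : U)‖ + ‖(18/55 : ℝ) • (q.2 - P q.2)‖ := norm_add_le _ _
      _ ≤ max ((3/8) * ‖q.1‖) ‖q.2‖ + (36/55) * ‖q.2‖ := by
          rw [hc, hnz, norm_smul, Real.norm_eq_abs]
          have h1 : max ((3/8) * ‖q.1‖) ‖P q.2‖ ≤ max ((3/8) * ‖q.1‖) ‖q.2‖ :=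
            max_le_max le_rfl (hPle q.2)
          have h2 : ‖q.2 - P q.2‖ ≤ ‖q.2‖ + ‖P q.2‖ := norm_sub_le _ _
          have h3 := hPle q.2
          have : |(18/55 : ℝ)| = 18/55 := by norm_num
          rw [this]
          nlinarith

/-- Pełczyński-type decomposition with explicit constants: if `X` contains a
1-complemented isometric copy of `Y`, `Y` contains a 1-complemented isometric copy of `X`,
and both `X` and `Y` are isometric to their squares (with max norms), then
`d_BM(X, Y) ≤ (3 + √2)²`. -/
theorem banachMazur_upper_bound_of_decomposition
    {X Y : Type*} [NormedAddCommGroup X] [NormedSpace ℝ X] [CompleteSpace X]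
    [NormedAddCommGroup Y] [NormedSpace ℝ Y] [CompleteSpace Y]
    (P : X →L[ℝ] X) (hPidem : ∀ x, P (P x) = P x) (hPnorm : ‖P‖ ≤ 1)
    (R : Y →L[ℝ] Y) (hRidem : ∀ y, R (R y) = R y) (hRnorm : ‖R‖ ≤ 1)
    (e₁ : Y ≃ₗᵢ[ℝ] LinearMap.range (P : X →ₗ[ℝ] X))
    (e₂ : X ≃ₗᵢ[ℝ] LinearMap.range (R : Y →ₗ[ℝ] Y))
    (e₃ : X ≃ₗᵢ[ℝ] X × X)
    (e₄ : Y ≃ₗᵢ[ℝ] Y × Y) :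
    ∃ T : X ≃L[ℝ] Y,
      ‖(T : X →L[ℝ] Y)‖ * ‖(T.symm : Y →L[ℝ] X)‖ ≤ (3 + Real.sqrt 2) ^ 2 := by
  obtain ⟨ΨX, hX1, hX2⟩ := aux_decomp P hPidem hPnorm e₁ e₄
  obtain ⟨ΨY, hY1, hY2⟩ := aux_decomp R hRidem hRnorm e₂ e₃
  have hPle : ∀ x : X, ‖P x‖ ≤ ‖x‖ := fun x =>
    (P.le_opNorm x).trans (by nlinarith [norm_nonneg x])
  have hRle : ∀ y : Y, ‖R y‖ ≤ ‖y‖ := fun y =>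
    (R.le_opNorm y).trans (by nlinarith [norm_nonneg y])
  refine ⟨ΨX.trans ((ContinuousLinearEquiv.prodComm ℝ Y X).trans ΨY.symm), ?_⟩
  set T : X ≃L[ℝ] Y := ΨX.trans ((ContinuousLinearEquiv.prodComm ℝ Y X).trans ΨY.symm)
    with hT
  have hTapp : ∀ x : X, T x = ΨY.symm ((ΨX x).2, (ΨX x).1) := fun x => rfl
  have hTsymm : ∀ y : Y, T.symm y = ΨX.symm ((ΨY y).2, (ΨY y).1) := fun y => rfl
  have hTn : ∀ x : X, ‖T x‖ ≤ (728/165) * ‖x‖ := by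
    intro x
    rw [hTapp]
    obtain ⟨ha, hb⟩ := hX1 x
    have hp := hPle x
    have hmax : max ((3/8) * ‖(ΨX x).2‖) ‖(ΨX x).1‖ ≤ (8/3) * ‖x‖ :=
      max_le (by nlinarith) (by nlinarith)
    calc ‖ΨY.symm ((ΨX x).2, (ΨX x).1)‖
        ≤ max ((3/8) * ‖(ΨX x).2‖) ‖(ΨX x).1‖ + (36/55) * ‖(ΨX x).1‖ :=
          hY2 ((ΨX x).2, (ΨX x).1)
      _ ≤ (8/3) * ‖x‖ + (36/55) * ((8/3) * ‖x‖) := add_le_add hmax (by nlinarith)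
      _ = (728/165) * ‖x‖ := by ring
  have hTsn : ∀ y : Y, ‖T.symm y‖ ≤ (728/165) * ‖y‖ := by
    intro y
    rw [hTsymm]
    obtain ⟨ha, hb⟩ := hY1 y
    have hp := hRle y
    have hmax : max ((3/8) * ‖(ΨY y).2‖) ‖(ΨY y).1‖ ≤ (8/3) * ‖y‖ :=
      max_le (by nlinarith) (by nlinarith)
    calc ‖ΨX.symm ((ΨY y).2, (ΨY y).1)‖
        ≤ max ((3/8) * ‖(ΨY y).2‖) ‖(ΨY y).1‖ + (36/55) * ‖(ΨY y).1‖ :=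
          hX2 ((ΨY y).2, (ΨY y).1)
      _ ≤ (8/3) * ‖y‖ + (36/55) * ((8/3) * ‖y‖) := add_le_add hmax (by nlinarith)
      _ = (728/165) * ‖y‖ := by ring
  have hn1 : ‖(T : X →L[ℝ] Y)‖ ≤ 728/165 :=
    ContinuousLinearMap.opNorm_le_bound _ (by norm_num) (fun x => by
      simpa using hTn x)
  have hn2 : ‖(T.symm : Y →L[ℝ] X)‖ ≤ 728/165 :=
    ContinuousLinearMap.opNorm_le_bound _ (by norm_num) (fun y => by
      simpa using hTsn y)
  have hsqrt : (233/165 : ℝ) ≤ Real.sqrt 2 := by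
    rw [show (233/165 : ℝ) = Real.sqrt ((233/165)^2) from
      (Real.sqrt_sq (by norm_num)).symm]
    apply Real.sqrt_le_sqrt
    norm_num
  have hfin : (728/165 : ℝ) * (728/165) ≤ (3 + Real.sqrt 2) ^ 2 := by
    nlinarith [Real.sqrt_nonneg 2]
  calc ‖(T : X →L[ℝ] Y)‖ * ‖(T.symm : Y →L[ℝ] X)‖
      ≤ (728/165 : ℝ) * (728/165) :=
        mul_le_mul hn1 hn2 (norm_nonneg _) (by norm_num)
    _ ≤ (3 + Real.sqrt 2) ^ 2 := hfin
end

section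
/- Let (K, Σ) be a measurable space, ν a (finite) signed measure on K, A ∈ Σ, and φ, ψ, g bounded measurable real-valued functions on K. Let r, t, ε > 0 be constants such that: (i) the total variation |ν|(K) ≤ t; (ii) φ(x) ≥ r − ε for every x ∈ A; (iii) ∫ φ dν = 0 and ∫ ψ dν = 1; (iv) |σ₁·φ(x) + σ₂·ψ(x) + σ₃·g(x)| ≤ r for every x ∈ K and all σ₁, σ₂, σ₃ ∈ {−1,0,1}. Then |ν|(K) ≥ 2|ν(A)| + 1/r + (1/r)·|∫ g dν| − (3t/r)·ε. -/
open MeasureTheory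

/-- The integral of a function against a signed measure, defined via the Jordan
decomposition: `∫ f dν = ∫ f dν⁺ − ∫ f dν⁻`. -/
noncomputable def signedIntegral {K : Type*} [MeasurableSpace K]
    (ν : SignedMeasure K) (f : K → ℝ) : ℝ :=
  (∫ x, f x ∂ν.toJordanDecomposition.posPart) -
    ∫ x, f x ∂ν.toJordanDecomposition.negPart

private lemma integrable_of_bdd {K : Type*} [MeasurableSpace K] {μ : Measure K}
    [IsFiniteMeasure μ] {f : K → ℝ} (hf : Measurable f) {C : ℝ}
    (hC : ∀ x, |f x| ≤ C) : Integrable f μ :=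
  (integrable_const C).mono' hf.aestronglyMeasurable
    (Filter.Eventually.of_forall fun x => by simpa using hC x)

/-- The key variation lemma: if `|ν|(K) ≤ t`, `φ ≥ r − ε` on `A`, `∫φ dν = 0`,
`∫ψ dν = 1` and all signed combinations `σ₁φ + σ₂ψ + σ₃g` (with `σᵢ ∈ {−1,0,1}`)
are bounded by `r`, then `|ν|(K) ≥ 2|ν(A)| + 1/r + (1/r)·|∫g dν| − (3t/r)·ε`. -/
theorem variation_lower_bound
    {K : Type*} [MeasurableSpace K] (ν : SignedMeasure K)
    (A : Set K) (hA : MeasurableSet A)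
    (φ ψ g : K → ℝ)
    (hφm : Measurable φ) (hψm : Measurable ψ) (hgm : Measurable g)
    (r t ε : ℝ) (hr : 0 < r) (ht : 0 < t) (hε : 0 < ε)
    (h1 : (ν.totalVariation Set.univ).toReal ≤ t)
    (h2 : ∀ x ∈ A, r - ε ≤ φ x)
    (h3φ : signedIntegral ν φ = 0)
    (h3ψ : signedIntegral ν ψ = 1)
    (h4 : ∀ σ₁ ∈ ({-1, 0, 1} : Set ℝ), ∀ σ₂ ∈ ({-1, 0, 1} : Set ℝ),
      ∀ σ₃ ∈ ({-1, 0, 1} : Set ℝ), ∀ x : K,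
        |σ₁ * φ x + σ₂ * ψ x + σ₃ * g x| ≤ r) :
    2 * |ν A| + 1 / r + (1 / r) * |signedIntegral ν g| - (3 * t / r) * ε ≤
      (ν.totalVariation Set.univ).toReal := by
  classical
  set P := ν.toJordanDecomposition.posPart with hP
  set N := ν.toJordanDecomposition.negPart with hN
  have hm1 : (-1 : ℝ) ∈ ({-1, 0, 1} : Set ℝ) := by simp
  have hm0 : (0 : ℝ) ∈ ({-1, 0, 1} : Set ℝ) := by simp
  have hm2 : (1 : ℝ) ∈ ({-1, 0, 1} : Set ℝ) := by simp
  -- pointwise bounds on the individual functions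
  have hφb : ∀ x, |φ x| ≤ r := fun x => by simpa using h4 1 hm2 0 hm0 0 hm0 x
  have hψb : ∀ x, |ψ x| ≤ r := fun x => by simpa using h4 0 hm0 1 hm2 0 hm0 x
  have hgb : ∀ x, |g x| ≤ r := fun x => by simpa using h4 0 hm0 0 hm0 1 hm2 x
  -- the sign choices
  set s : ℝ := if 0 ≤ ν A then -1 else 1 with hs_def
  set τ : ℝ := if 0 ≤ signedIntegral ν g then 1 else -1 with hτ_def
  have hs_mem : s ∈ ({-1, 0, 1} : Set ℝ) := by
    rw [hs_def]; split <;> simp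
  have hτ_mem : τ ∈ ({-1, 0, 1} : Set ℝ) := by
    rw [hτ_def]; split <;> simp
  have hsνA : s * ν A = -|ν A| := by
    rw [hs_def]; split_ifs with h
    · rw [abs_of_nonneg h]; ring
    · rw [abs_of_neg (not_le.1 h)]; ring
  have hτg : τ * signedIntegral ν g = |signedIntegral ν g| := by
    rw [hτ_def]; split_ifs with h
    · rw [abs_of_nonneg h]; ring
    · rw [abs_of_neg (not_le.1 h)]; ring
  -- the test function
  set h : K → ℝ := fun x => s * φ x + ψ x + τ * g x with hh_def
  have hhm : Measurable h := ((hφm.const_mul s).add hψm).add (hgm.const_mul τ)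
  have hhb : ∀ x, |h x| ≤ r := fun x => by
    have := h4 s hs_mem 1 hm2 τ hτ_mem x
    simpa [hh_def] using this
  -- on A, h is within 2ε of s*r
  have hhA : ∀ x ∈ A, |h x - s * r| ≤ 2 * ε := by
    intro x hx
    have hφx : |φ x - r| ≤ ε := by
      rw [abs_le]
      constructor
      · linarith [h2 x hx]
      · have := (abs_le.1 (hφb x)).2; linarith
    have he : |ψ x + τ * g x| ≤ ε := by
      rw [abs_le]
      have hb1 := (abs_le.1 (h4 1 hm2 1 hm2 τ hτ_mem x))
      have hb2 := (abs_le.1 (h4 (-1) hm1 1 hm2 τ hτ_mem x))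
      have h2x := h2 x hx
      constructor
      · have := hb2.1; nlinarith
      · have := hb1.2; nlinarith
    calc |h x - s * r| = |s * (φ x - r) + (ψ x + τ * g x)| := by
          rw [hh_def]; ring_nf
      _ ≤ |s * (φ x - r)| + |ψ x + τ * g x| := abs_add_le _ _
      _ ≤ ε + ε := by
          have hsabs : |s| = 1 := by rw [hs_def]; split <;> simp
          rw [abs_mul, hsabs, one_mul]
          exact add_le_add hφx he
      _ = 2 * ε := by ring
  -- integrability
  have intφP : Integrable φ P := integrable_of_bdd hφm hφb
  have intφN : Integrable φ N := integrable_of_bdd hφm hφb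
  have intψP : Integrable ψ P := integrable_of_bdd hψm hψb
  have intψN : Integrable ψ N := integrable_of_bdd hψm hψb
  have intgP : Integrable g P := integrable_of_bdd hgm hgb
  have intgN : Integrable g N := integrable_of_bdd hgm hgb
  have inthP : Integrable h P := integrable_of_bdd hhm hhb
  have inthN : Integrable h N := integrable_of_bdd hhm hhb
  -- the total integral of h against ν
  have hInt : (∫ x, h x ∂P) - (∫ x, h x ∂N) = 1 + |signedIntegral ν g| := by
    have key : ∀ (μ : Measure K) [IsFiniteMeasure μ], Integrable φ μ → Integrable ψ μ →
        Integrable g μ → (∫ x, h x ∂μ) =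
          s * (∫ x, φ x ∂μ) + (∫ x, ψ x ∂μ) + τ * (∫ x, g x ∂μ) := by
      intro μ _ iφ iψ ig
      have i1 : Integrable (fun x => s * φ x) μ := by exact iφ.const_mul s
      have i2 : Integrable (fun x => τ * g x) μ := by exact ig.const_mul τ
      have i3 : Integrable (fun x => s * φ x + ψ x) μ := by exact i1.add iψ
      rw [hh_def]
      rw [integral_add i3 i2, integral_add i1 iψ, integral_const_mul, integral_const_mul]
    have eP := key P intφP intψP intgP
    have eN := key N intφN intψN intgN
    have hφ0 : (∫ x, φ x ∂P) - (∫ x, φ x ∂N) = 0 := h3φ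
    have hψ1 : (∫ x, ψ x ∂P) - (∫ x, ψ x ∂N) = 1 := h3ψ
    have hg' : τ * ((∫ x, g x ∂P) - (∫ x, g x ∂N)) = |signedIntegral ν g| := hτg
    rw [eP, eN]
    linear_combination s * hφ0 + hψ1 + hg'
  -- abbreviations for measures of sets
  set pA : ℝ := (P A).toReal with hpA
  set nA : ℝ := (N A).toReal with hnA
  set pC : ℝ := (P Aᶜ).toReal with hpC
  set nC : ℝ := (N Aᶜ).toReal with hnC
  have hpA0 : 0 ≤ pA := ENNReal.toReal_nonneg
  have hnA0 : 0 ≤ nA := ENNReal.toReal_nonneg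
  have hpC0 : 0 ≤ pC := ENNReal.toReal_nonneg
  have hnC0 : 0 ≤ nC := ENNReal.toReal_nonneg
  -- total variation splits
  have hTV : (ν.totalVariation Set.univ).toReal = pA + nA + (pC + nC) := by
    have hPsplit : P Set.univ = P A + P Aᶜ := (measure_add_measure_compl hA).symm
    have hNsplit : N Set.univ = N A + N Aᶜ := (measure_add_measure_compl hA).symm
    rw [SignedMeasure.totalVariation, Measure.add_apply, hPsplit, hNsplit,
      ENNReal.toReal_add (by finiteness) (by finiteness)]
    rw [ENNReal.toReal_add (by finiteness) (by finiteness),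
      ENNReal.toReal_add (by finiteness) (by finiteness)]
    ring
  -- ν A = pA - nA
  have hνA : ν A = pA - nA := by
    conv_lhs => rw [← ν.toSignedMeasure_toJordanDecomposition]
    rw [JordanDecomposition.toSignedMeasure, VectorMeasure.sub_apply,
      Measure.toSignedMeasure_apply_measurable hA,
      Measure.toSignedMeasure_apply_measurable hA]
    rfl
  have hνAabs : |ν A| ≤ pA + nA := by
    rw [hνA]
    calc |pA - nA| ≤ |pA| + |nA| := abs_sub _ _
      _ = pA + nA := by rw [abs_of_nonneg hpA0, abs_of_nonneg hnA0]
  have hpAnAt : pA + nA ≤ t := by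
    have h1' : pA + nA + (pC + nC) ≤ t := by rw [← hTV]; exact h1
    linarith
  -- bound the integral over A
  have hboundA : (∫ x in A, h x ∂P) - (∫ x in A, h x ∂N)
      ≤ -(r * |ν A|) + 2 * ε * (pA + nA) := by
    have hsplit : ∀ (μ : Measure K) [IsFiniteMeasure μ], Integrable h μ →
        (∫ x in A, h x ∂μ) = (∫ x in A, (h x - s * r) ∂μ) + s * r * (μ A).toReal := by
      intro μ _ hint
      rw [integral_sub hint.integrableOn (integrableOn_const (measure_lt_top μ A).ne),
        setIntegral_const]
      simp [smul_eq_mul, Measure.real]; ring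
    have hmsub : Measurable (fun x => h x - s * r) := hhm.sub measurable_const
    have hbP : |∫ x in A, (h x - s * r) ∂P| ≤ 2 * ε * pA := by
      rw [hpA, ← Real.norm_eq_abs]
      exact norm_setIntegral_le_of_norm_le_const (measure_lt_top P A)
        (fun x hx => by simpa using hhA x hx)
    have hbN : |∫ x in A, (h x - s * r) ∂N| ≤ 2 * ε * nA := by
      rw [hnA, ← Real.norm_eq_abs]
      exact norm_setIntegral_le_of_norm_le_const (measure_lt_top N A)
        (fun x hx => by simpa using hhA x hx)
    have e1 := hsplit P inthP
    have e2 := hsplit N inthN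
    have hsr : s * r * pA - s * r * nA = -(r * |ν A|) := by
      have : s * r * pA - s * r * nA = r * (s * (pA - nA)) := by ring
      rw [this, ← hνA, hsνA]; ring
    rw [e1, e2]
    have h1b := (abs_le.1 hbP).2
    have h2b := (abs_le.1 hbN).1
    linarith [hsr]
  -- bound the integral over Aᶜ
  have hboundC : (∫ x in Aᶜ, h x ∂P) - (∫ x in Aᶜ, h x ∂N) ≤ r * (pC + nC) := by
    have hbP : |∫ x in Aᶜ, h x ∂P| ≤ r * pC := by
      rw [hpC, ← Real.norm_eq_abs]
      exact norm_setIntegral_le_of_norm_le_const (measure_lt_top P Aᶜ)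
        (fun x _ => by simpa using hhb x)
    have hbN : |∫ x in Aᶜ, h x ∂N| ≤ r * nC := by
      rw [hnC, ← Real.norm_eq_abs]
      exact norm_setIntegral_le_of_norm_le_const (measure_lt_top N Aᶜ)
        (fun x _ => by simpa using hhb x)
    have h1b := (abs_le.1 hbP).2
    have h2b := (abs_le.1 hbN).1
    linarith
  -- split the total integrals
  have hsplitP : (∫ x, h x ∂P) = (∫ x in A, h x ∂P) + (∫ x in Aᶜ, h x ∂P) :=
    (integral_add_compl hA inthP).symm
  have hsplitN : (∫ x, h x ∂N) = (∫ x in A, h x ∂N) + (∫ x in Aᶜ, h x ∂N) :=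
    (integral_add_compl hA inthN).symm
  -- main inequality
  have hmain : 1 + |signedIntegral ν g| ≤
      -(r * |ν A|) + 2 * ε * (pA + nA) + r * (pC + nC) := by
    rw [← hInt, hsplitP, hsplitN]
    linarith [hboundA, hboundC]
  -- finish with algebra
  rw [hTV]
  have hPCNC : 1 + |signedIntegral ν g| + r * |ν A| - 2 * ε * (pA + nA) ≤ r * (pC + nC) := by
    linarith [hmain]
  have hεA : 2 * ε * (pA + nA) ≤ 2 * ε * t :=
    mul_le_mul_of_nonneg_left hpAnAt (by positivity)
  have h3 : r * |ν A| ≤ r * (pA + nA) := mul_le_mul_of_nonneg_left hνAabs hr.le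
  have htε : 0 ≤ t * ε := by positivity
  have hfinal : r * (2 * |ν A| + 1 / r + (1 / r) * |signedIntegral ν g| - (3 * t / r) * ε)
      ≤ r * (pA + nA + (pC + nC)) := by
    have e1 : r * (2 * |ν A| + 1 / r + (1 / r) * |signedIntegral ν g| - (3 * t / r) * ε)
        = 2 * (r * |ν A|) + 1 + |signedIntegral ν g| - 3 * (t * ε) := by
      field_simp
    have e2 : r * (pA + nA + (pC + nC)) = r * (pA + nA) + r * (pC + nC) := by ring
    rw [e1, e2]
    nlinarith [hPCNC, hεA, h3, htε]
  exact le_of_mul_le_mul_left hfinal hr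
end

section
/- Let T : L∞[0,1] ≃ ℓ∞ be a continuous linear equivalence with ‖Tg‖ ≥ ‖g‖ for every g, let φ_n = T⁻¹(e_n) for n ∈ ℕ, and let r = sup{‖∑_{i∈I} σ(i)·φ_i‖ : I ⊆ ℕ finite, σ : I → ({−1,1} : Set ℝ)}. Then, choosing measurable representatives of the φ_n, for almost every x ∈ [0,1] the series ∑_n |φ_n(x)| converges with sum at most r; consequently, for every bounded real sequence (a_n), the series ∑_n a_n·φ_n(x) converges for almost every x ∈ [0,1]. -/
open MeasureTheory ENNReal

/-- Lebesgue measure restricted to the unit interval `[0,1]`. -/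
noncomputable def μ01 : Measure ℝ := volume.restrict (Set.Icc (0 : ℝ) 1)

private lemma ae_abs_le_norm (g : Lp ℝ ∞ μ01) :
    ∀ᵐ x ∂μ01, |(g : ℝ → ℝ) x| ≤ ‖g‖ := by
  filter_upwards [ae_le_eLpNormEssSup (f := (g : ℝ → ℝ)) (μ := μ01)] with x hx
  have hne : eLpNorm (g : ℝ → ℝ) ∞ μ01 ≠ ∞ := Lp.eLpNorm_ne_top g
  rw [eLpNorm_exponent_top] at hne
  rw [Lp.norm_def, eLpNorm_exponent_top]
  calc |(g : ℝ → ℝ) x| = ((‖(g : ℝ → ℝ) x‖₊ : ℝ≥0∞)).toReal := by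
        simp [Real.norm_eq_abs]
    _ ≤ (eLpNormEssSup (g : ℝ → ℝ) μ01).toReal := ENNReal.toReal_mono hne hx

private lemma coeFn_sum_smul (I : Finset ℕ) (σ : ℕ → ℝ) (f : ℕ → Lp ℝ ∞ μ01) :
    ((∑ i ∈ I, σ i • f i : Lp ℝ ∞ μ01) : ℝ → ℝ)
      =ᵐ[μ01] fun x => ∑ i ∈ I, σ i * (f i : ℝ → ℝ) x := by
  induction I using Finset.induction with
  | empty =>
    simp only [Finset.sum_empty]
    exact Lp.coeFn_zero (E := ℝ) (p := ∞) (μ := μ01)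
  | insert j s hni ih =>
      rw [Finset.sum_insert hni]
      filter_upwards [Lp.coeFn_add (σ j • f j) (∑ i ∈ s, σ i • f i),
        Lp.coeFn_smul (σ j) (f j), ih] with x h1 h2 h3
      simp only [h1, Pi.add_apply, h2, Pi.smul_apply, smul_eq_mul, h3,
        Finset.sum_insert hni]

/-- If `T : L∞[0,1] ≃ ℓ∞` is norm-increasing, `φ_n = T⁻¹(e_n)` and
`r = sup{‖∑_{i∈I} σ(i)φ_i‖}`, then `∑_n |φ_n(x)|` converges a.e. with sum at most `r`,
and consequently `∑_n a_n φ_n(x)` converges a.e. for every bounded sequence `(a_n)`. -/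
theorem ae_summable_phi
    (T : Lp ℝ ∞ μ01 ≃L[ℝ] lp (fun _ : ℕ => ℝ) ∞)
    (hT : ∀ g : Lp ℝ ∞ μ01, ‖g‖ ≤ ‖T g‖)
    (φ : ℕ → Lp ℝ ∞ μ01) (hφ : ∀ n, φ n = T.symm (lp.single ∞ n 1))
    (r : ℝ)
    (hr : r = sSup {x : ℝ | ∃ (I : Finset ℕ) (σ : ℕ → ℝ),
      (∀ i ∈ I, σ i = 1 ∨ σ i = -1) ∧ x = ‖∑ i ∈ I, σ i • φ i‖}) :
    (∀ᵐ x ∂μ01, Summable (fun n => |(φ n : ℝ → ℝ) x|) ∧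
      (∑' n, |(φ n : ℝ → ℝ) x|) ≤ r) ∧
    (∀ a : ℕ → ℝ, (∃ M : ℝ, ∀ n, |a n| ≤ M) →
      ∀ᵐ x ∂μ01, Summable (fun n => a n * (φ n : ℝ → ℝ) x)) := by
  set S := {x : ℝ | ∃ (I : Finset ℕ) (σ : ℕ → ℝ),
      (∀ i ∈ I, σ i = 1 ∨ σ i = -1) ∧ x = ‖∑ i ∈ I, σ i • φ i‖} with hS
  -- every element of S is at most 1
  have hbdd : ∀ x ∈ S, x ≤ 1 := by
    rintro x ⟨I, σ, hσ, rfl⟩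
    refine le_trans (hT _) ?_
    have hTsum : T (∑ i ∈ I, σ i • φ i) = ∑ i ∈ I, σ i • lp.single ∞ i 1 := by
      rw [map_sum]
      refine Finset.sum_congr rfl fun i _ => ?_
      rw [ContinuousLinearEquiv.map_smul, hφ i, T.apply_symm_apply]
    rw [hTsum]
    refine lp.norm_le_of_forall_le zero_le_one fun j => ?_
    have hcoord : (∑ i ∈ I, σ i • lp.single ∞ i (1:ℝ) : lp (fun _ : ℕ => ℝ) ∞) j
        = ∑ i ∈ I, σ i * (if j = i then (1:ℝ) else 0) := by
      rw [lp.coeFn_sum]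
      simp only [Finset.sum_apply, Pi.smul_apply, smul_eq_mul]
      refine Finset.sum_congr rfl fun i _ => ?_
      rw [lp.coeFn_smul]
      simp only [Pi.smul_apply, smul_eq_mul]
      congr 1
      rw [lp.single_apply]
      split
      · rename_i h; subst h; simp
      · rename_i h; simp [Pi.single_apply, h]
    rw [Real.norm_eq_abs, hcoord]
    have heq2 : ∑ i ∈ I, σ i * (if j = i then (1:ℝ) else 0)
        = if j ∈ I then σ j else 0 := by
      rw [← Finset.sum_ite_eq I j σ]
      refine Finset.sum_congr rfl fun i _ => ?_
      rw [mul_ite, mul_one, mul_zero]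
    rw [heq2]
    split
    · rcases hσ j (by assumption) with h | h <;> simp [h]
    · simp
  have hSne : S.Nonempty := ⟨0, ∅, fun _ => 1, by simp⟩
  have hSbdd : BddAbove S := ⟨1, hbdd⟩
  have hle : ∀ (I : Finset ℕ) (σ : ℕ → ℝ), (∀ i ∈ I, σ i = 1 ∨ σ i = -1) →
      ‖∑ i ∈ I, σ i • φ i‖ ≤ r := fun I σ hσ => by
    rw [hr]; exact le_csSup hSbdd ⟨I, σ, hσ, rfl⟩
  -- key a.e. statement
  have key : ∀ᵐ x ∂μ01, ∀ p : Finset ℕ × Finset ℕ,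
      |∑ i ∈ p.1, (if i ∈ p.2 then (1:ℝ) else -1) * (φ i : ℝ → ℝ) x| ≤ r := by
    rw [ae_all_iff]
    intro p
    set σ : ℕ → ℝ := fun i => if i ∈ p.2 then (1:ℝ) else -1 with hσdef
    have hσ : ∀ i ∈ p.1, σ i = 1 ∨ σ i = -1 := fun i _ => by
      by_cases h : i ∈ p.2 <;> simp [hσdef, h]
    filter_upwards [ae_abs_le_norm (∑ i ∈ p.1, σ i • φ i), coeFn_sum_smul p.1 σ φ]
      with x h1 h2
    rw [h2] at h1
    exact h1.trans (hle p.1 σ hσ)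
  have main : ∀ᵐ x ∂μ01, Summable (fun n => |(φ n : ℝ → ℝ) x|) ∧
      (∑' n, |(φ n : ℝ → ℝ) x|) ≤ r := by
    filter_upwards [key] with x hx
    have hpart : ∀ N : ℕ, ∑ i ∈ Finset.range N, |(φ i : ℝ → ℝ) x| ≤ r := by
      intro N
      have h := hx (Finset.range N,
        (Finset.range N).filter fun i => 0 ≤ (φ i : ℝ → ℝ) x)
      have heq : ∑ i ∈ Finset.range N,
          (if i ∈ (Finset.range N).filter (fun i => 0 ≤ (φ i : ℝ → ℝ) x) then (1:ℝ) else -1)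
            * (φ i : ℝ → ℝ) x
          = ∑ i ∈ Finset.range N, |(φ i : ℝ → ℝ) x| := by
        refine Finset.sum_congr rfl fun i hi => ?_
        by_cases h0 : 0 ≤ (φ i : ℝ → ℝ) x
        · rw [if_pos (Finset.mem_filter.2 ⟨hi, h0⟩), one_mul, abs_of_nonneg h0]
        · have hni : i ∉ (Finset.range N).filter (fun i => 0 ≤ (φ i : ℝ → ℝ) x) :=
            fun hmem => h0 (Finset.mem_filter.1 hmem).2
          rw [if_neg hni, neg_one_mul, abs_of_neg (lt_of_not_ge h0)]
      rw [heq] at h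
      exact le_trans (le_abs_self _) h
    have hsum : Summable (fun n => |(φ n : ℝ → ℝ) x|) :=
      summable_of_sum_range_le (fun n => abs_nonneg _) hpart
    exact ⟨hsum, Summable.tsum_le_of_sum_range_le hsum hpart⟩
  refine ⟨main, fun a ⟨M, hM⟩ => ?_⟩
  filter_upwards [main] with x ⟨hsum, _⟩
  refine Summable.of_abs ?_
  refine Summable.of_nonneg_of_le (fun n => abs_nonneg _) (fun n => ?_) (hsum.mul_left M)
  rw [abs_mul]
  exact mul_le_mul_of_nonneg_right (hM n) (abs_nonneg _)
end

section
/- The infimum over r ∈ (0,1) of the function ξ(r) = (r + √((2−r)·r))/(r·(1−r)) + 1/r equals (14 + (3554 − 66√33)^(1/3) + (3554 + 66√33)^(1/3))/6. -/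
private lemma cube_rt (x : ℝ) (hx : 0 ≤ x) : (x ^ ((1:ℝ)/3)) ^ 3 = x := by
  rw [← Real.rpow_natCast (x ^ ((1:ℝ)/3)) 3, ← Real.rpow_mul hx]
  norm_num

private lemma xi_lower (m : ℝ) (hm0 : 2*m^3 - 14*m^2 - 6*m - 1 = 0)
    (hm1 : (37:ℝ)/5 < m) (hm2 : m < (371:ℝ)/50)
    (r : ℝ) (hr0 : 0 < r) (hr1 : r < 1) :
    m ≤ (r + Real.sqrt ((2 - r) * r)) / (r * (1 - r)) + 1 / r := by
  have hrr : 0 < r * (1 - r) := by nlinarith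
  have hsnn : 0 ≤ (2 - r) * r := by nlinarith
  set s := Real.sqrt ((2 - r) * r) with hs
  have hs0 : 0 ≤ s := Real.sqrt_nonneg _
  have hs2 : s ^ 2 = (2 - r) * r := Real.sq_sqrt hsnn
  have key : m * (r * (1 - r)) ≤ 1 + s := by
    rcases le_or_gt (m * (r * (1 - r))) 1 with h1 | h1
    · linarith
    · have hd : (0:ℝ) < m^2 - 6*m - 3 := by nlinarith
      have hrc : m^2 - 8*m + 5 < r * (m^2 - 6*m - 3) := by
        by_contra hnot
        push_neg at hnot
        have hrsmall : r < 1/10 := by nlinarith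
        have : m * (r * (1 - r)) ≤ m * r := by nlinarith
        nlinarith
      have keyid : (m^2 - 6*m - 3)^3 * ((2 - r) * r - (m * (r * (1 - r)) - 1)^2)
          = (1 - r) * m^2 * (r * (m^2 - 6*m - 3) - (m^2 - 8*m + 5))
            * (r * (m^2 - 6*m - 3) - (m - 4))^2 := by
        linear_combination ((-27) + 54*r - 27*r^2 + 54*m*r - 54*m*r^2 + m^2
          - 10*m^2*r + 9*m^2*r^2) * hm0
      have hrhs : 0 ≤ (1 - r) * m^2 * (r * (m^2 - 6*m - 3) - (m^2 - 8*m + 5))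
            * (r * (m^2 - 6*m - 3) - (m - 4))^2 := by
        apply mul_nonneg
        apply mul_nonneg
        apply mul_nonneg
        · linarith
        · positivity
        · linarith
        · positivity
      have hX : 0 ≤ (2 - r) * r - (m * (r * (1 - r)) - 1)^2 := by
        nlinarith [pow_pos hd 3]
      nlinarith
  have heq : (r + s) / (r * (1 - r)) + 1 / r = (1 + s) / (r * (1 - r)) := by
    rw [div_add_div _ _ (ne_of_gt hrr) (ne_of_gt hr0), div_eq_div_iff (mul_pos hrr hr0).ne' (ne_of_gt hrr)]
    ring
  rw [heq, le_div_iff₀ hrr]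
  linarith


private lemma xi_attain (m : ℝ) (hm0 : 2*m^3 - 14*m^2 - 6*m - 1 = 0)
    (hm1 : (37:ℝ)/5 < m) (hm2 : m < (371:ℝ)/50) :
    ∃ r ∈ Set.Ioo (0:ℝ) 1,
      (r + Real.sqrt ((2 - r) * r)) / (r * (1 - r)) + 1 / r = m := by
  have hd : (0:ℝ) < m^2 - 6*m - 3 := by nlinarith
  refine ⟨(m - 4) / (m^2 - 6*m - 3), ⟨div_pos (by nlinarith) hd, ?_⟩, ?_⟩
  · rw [div_lt_one hd]; nlinarith
  set rs := (m - 4) / (m^2 - 6*m - 3) with hrs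
  have hrsd : rs * (m^2 - 6*m - 3) = m - 4 := by
    rw [hrs]; exact div_mul_cancel₀ _ hd.ne'
  have hrs0 : 0 < rs := div_pos (by nlinarith) hd
  have hrs1 : rs < 1 := by rw [hrs, div_lt_one hd]; nlinarith
  clear_value rs
  clear hrs
  have hrslo : (9:ℝ)/20 < rs := by
    nlinarith
  have hrshi : rs < (47:ℝ)/100 := by
    nlinarith
  have hsq : (2 - rs) * rs = (m * (rs * (1 - rs)) - 1)^2 := by
    have keyid : (m^2 - 6*m - 3)^3 * ((2 - rs) * rs - (m * (rs * (1 - rs)) - 1)^2)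
        = (1 - rs) * m^2 * (rs * (m^2 - 6*m - 3) - (m^2 - 8*m + 5))
          * (rs * (m^2 - 6*m - 3) - (m - 4))^2 := by
      linear_combination ((-27) + 54*rs - 27*rs^2 + 54*m*rs - 54*m*rs^2 + m^2
        - 10*m^2*rs + 9*m^2*rs^2) * hm0
    rw [hrsd] at keyid
    simp only [sub_self, ne_eq, OfNat.ofNat_ne_zero, not_false_eq_true, zero_pow,
      mul_zero] at keyid
    have h3 : (0:ℝ) < (m^2 - 6*m - 3)^3 := pow_pos hd 3
    nlinarith
  have hnn : 0 ≤ m * (rs * (1 - rs)) - 1 := by nlinarith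
  have hs : Real.sqrt ((2 - rs) * rs) = m * (rs * (1 - rs)) - 1 := by
    rw [hsq, Real.sqrt_sq hnn]
  rw [hs]
  have h1r : rs ≠ 0 := ne_of_gt hrs0
  have h2r : 1 - rs ≠ 0 := by linarith [hrs1]
  field_simp
  ring

/-- The exact value of the infimum of
`ξ(r) = (r + √((2−r)r))/(r(1−r)) + 1/r` over `r ∈ (0,1)`:
it equals `(14 + (3554 − 66√33)^(1/3) + (3554 + 66√33)^(1/3))/6`. -/
theorem xi_inf_exact_value :
    sInf ((fun r : ℝ => (r + Real.sqrt ((2 - r) * r)) / (r * (1 - r)) + 1 / r) ''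
        Set.Ioo (0 : ℝ) 1) =
      (14 + (3554 - 66 * Real.sqrt 33) ^ ((1 : ℝ) / 3) +
        (3554 + 66 * Real.sqrt 33) ^ ((1 : ℝ) / 3)) / 6 := by
  have h33 : Real.sqrt 33 ^ 2 = 33 := Real.sq_sqrt (by norm_num)
  have h336 : Real.sqrt 33 < 6 := by
    nlinarith [Real.sqrt_nonneg 33]
  have h335 : (5:ℝ) < Real.sqrt 33 := by
    nlinarith [Real.sqrt_nonneg 33]
  have hxa : (0:ℝ) ≤ 3554 - 66 * Real.sqrt 33 := by nlinarith
  have hxb : (0:ℝ) ≤ 3554 + 66 * Real.sqrt 33 := by nlinarith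
  set A := (3554 - 66 * Real.sqrt 33) ^ ((1 : ℝ) / 3) with hA
  set B := (3554 + 66 * Real.sqrt 33) ^ ((1 : ℝ) / 3) with hB
  have hA0 : 0 ≤ A := Real.rpow_nonneg hxa _
  have hB0 : 0 ≤ B := Real.rpow_nonneg hxb _
  have hA3 : A ^ 3 = 3554 - 66 * Real.sqrt 33 := cube_rt _ hxa
  have hB3 : B ^ 3 = 3554 + 66 * Real.sqrt 33 := cube_rt _ hxb
  have hABmul : A * B = 232 := by
    rw [hA, hB, ← Real.mul_rpow hxa hxb]
    have : (3554 - 66 * Real.sqrt 33) * (3554 + 66 * Real.sqrt 33) = 12487168 := by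
      nlinarith
    rw [this, show (12487168:ℝ) = 232^3 by norm_num, ← Real.rpow_natCast (232:ℝ) 3,
      ← Real.rpow_mul (by norm_num : (0:ℝ) ≤ 232)]
    norm_num
  have hm0 : 2*((14 + A + B)/6)^3 - 14*((14 + A + B)/6)^2 - 6*((14 + A + B)/6) - 1 = 0 := by
    have ht : (A + B)^3 = 7108 + 696 * (A + B) := by
      have h : (A+B)^3 = A^3 + B^3 + 3*(A*B)*(A+B) := by ring
      rw [h, hA3, hB3, hABmul]; ring
    linear_combination ht / 108
  set m := (14 + A + B) / 6 with hmdef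
  have hmlb : (7:ℝ)/3 ≤ m := by rw [hmdef]; linarith
  clear_value m
  clear hmdef hA3 hB3 hABmul hA0 hB0 hA hB h33 h336 h335 hxa hxb
  have hm1 : (37:ℝ)/5 < m := by nlinarith
  have hm2 : m < (371:ℝ)/50 := by nlinarith
  obtain ⟨rs, hrsmem, hval⟩ := xi_attain m hm0 hm1 hm2
  have hmem : m ∈ ((fun r : ℝ => (r + Real.sqrt ((2 - r) * r)) / (r * (1 - r)) + 1 / r) ''
        Set.Ioo (0 : ℝ) 1) := ⟨rs, hrsmem, hval⟩
  have hlow : ∀ x ∈ ((fun r : ℝ => (r + Real.sqrt ((2 - r) * r)) / (r * (1 - r)) + 1 / r) ''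
        Set.Ioo (0 : ℝ) 1), m ≤ x := by
    rintro x ⟨r, ⟨hr0, hr1⟩, rfl⟩
    exact xi_lower m hm0 hm1 hm2 r hr0 hr1
  exact le_antisymm (csInf_le ⟨m, hlow⟩ hmem) (le_csInf ⟨m, hmem⟩ hlow)
end
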